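/- Let X ⊆ X̄ and Y ⊆ Ȳ be convex closures of Boolean metric spaces over a Boolean ring B. Every contractive map f : X → Y extends to a unique contractive map f̄ : X̄ → Ȳ. Moreover, f̄ is an immersion if and only if f is an immersion, and if f is an isometry then f̄ is an isometry. -/
import Mathlib


/-- The order on a Boolean ring: `a ≤ b` iff `a * b = a`. -/
def ble {B : Type} [BooleanRing B] (a b : B) : Prop := a * b = a

/-- The join on a Boolean ring: `a ∨ b = a + b + a * b`. -/
def bjoin {B : Type} [BooleanRing B] (a b : B) : B := a + b + a * b

/-- A Boolean metric space over a Boolean ring `B`: `d x y = 0` iff `x = y`,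
`d` is symmetric, and `d x z ≤ d x y ∨ d y z`. -/
structure BooleanMetric (B : Type) [BooleanRing B] (X : Type) where
  d : X → X → B
  d_eq_zero : ∀ x y, d x y = 0 ↔ x = y
  d_symm : ∀ x y, d x y = d y x
  d_tri : ∀ x y z, ble (d x z) (bjoin (d x y) (d y z))

/-- The coefficients `a i` have pairwise zero products. -/
def PairwiseOrthCoeffs {B : Type} [BooleanRing B] {k : ℕ} (a : Fin k → B) : Prop :=
  ∀ i j, i ≠ j → a i * a j = 0

/-- `x` is a convex combination of `x₁, …, xₖ` with coefficients `a₁, …, aₖ`,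
i.e. `aᵢ · d(x, xᵢ) = 0` for all `i`. -/
def IsConvComb {B X : Type} [BooleanRing B] (m : BooleanMetric B X) {k : ℕ}
    (a : Fin k → B) (xs : Fin k → X) (x : X) : Prop :=
  ∀ i, a i * m.d x (xs i) = 0

/-- A subset `S` is convex: every convex combination of points of `S` (with pairwise
disjoint coefficients summing to `1`) exists in `S`. -/
def IsConvexSubspace {B X : Type} [BooleanRing B] (m : BooleanMetric B X) (S : Set X) : Prop :=
  ∀ (k : ℕ) (a : Fin k → B) (xs : Fin k → X), (∀ i, xs i ∈ S) →
    PairwiseOrthCoeffs a → (∑ i, a i) = 1 → ∃ x ∈ S, IsConvComb m a xs x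

/-- A subset `S` is a CFG-space: it is convex and there are finitely many points of `S`
of which every point of `S` is a convex combination. -/
def IsCFGSubspace {B X : Type} [BooleanRing B] (m : BooleanMetric B X) (S : Set X) : Prop :=
  IsConvexSubspace m S ∧
  ∃ (k : ℕ) (xs : Fin k → X), (∀ i, xs i ∈ S) ∧
    ∀ x ∈ S, ∃ a : Fin k → B, PairwiseOrthCoeffs a ∧ (∑ i, a i) = 1 ∧ IsConvComb m a xs x

/-- A contractive map: `d(f x, f y) ≤ d(x, y)`. -/
def Contractive {B X Y : Type} [BooleanRing B] (mX : BooleanMetric B X) (mY : BooleanMetric B Y)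
    (f : X → Y) : Prop :=
  ∀ x y, ble (mY.d (f x) (f y)) (mX.d x y)

/-- `sm a x` is the convex combination `a x + (a+1) 0` of `x` and the base point `z`
with coefficients `a` and `a + 1`. -/
def IsScalarMul {B X : Type} [BooleanRing B] (m : BooleanMetric B X) (z : X)
    (sm : B → X → X) : Prop :=
  ∀ a x, a * m.d (sm a x) x = 0 ∧ (a + 1) * m.d (sm a x) z = 0

/-- `x ⊥ y`, i.e. `x ⋆ y = (d(x,y)+1) x = 0`. -/
def Orth {B X : Type} [BooleanRing B] (m : BooleanMetric B X) (z : X) (sm : B → X → X)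
    (x y : X) : Prop :=
  sm (m.d x y + 1) x = z

/-- `x` is the convex combination of `0, x₁, …, xₖ` with coefficients
`a₀ = 1 + a₁ + ⋯ + aₖ, a₁, …, aₖ`. -/
def ConvCombWithZero {B X : Type} [BooleanRing B] (m : BooleanMetric B X) (z : X) {k : ℕ}
    (a : Fin k → B) (xs : Fin k → X) (x : X) : Prop :=
  PairwiseOrthCoeffs a ∧ (∀ i, a i * m.d x (xs i) = 0) ∧ (1 + ∑ i, a i) * m.d x z = 0

/-- `x₁, …, xₖ` is a referential of `(X, z)`: the `xᵢ` are nonzero, pairwise orthogonal,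
and every point of `X` is a convex combination of `0, x₁, …, xₖ`. -/
def IsReferential {B X : Type} [BooleanRing B] (m : BooleanMetric B X) (z : X)
    (sm : B → X → X) {k : ℕ} (xs : Fin k → X) : Prop :=
  (∀ i, xs i ≠ z) ∧ (∀ i j, i ≠ j → Orth m z sm (xs i) (xs j)) ∧
  ∀ x : X, ∃ a : Fin k → B, ConvCombWithZero m z a xs x

/-- The whole space is a convex closure of the subset `S`: it is convex and every point
is a convex combination of points of `S`. -/
def IsConvexClosure {B X : Type} [BooleanRing B] (m : BooleanMetric B X) (S : Set X) : Prop :=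
  IsConvexSubspace m Set.univ ∧
  ∀ x : X, ∃ (k : ℕ) (a : Fin k → B) (xs : Fin k → X),
    (∀ i, xs i ∈ S) ∧ PairwiseOrthCoeffs a ∧ (∑ i, a i) = 1 ∧ IsConvComb m a xs x

/-- A finite set `R` is a referential of `(X, z)` (set version). -/
def IsReferentialSet {B X : Type} [BooleanRing B] (m : BooleanMetric B X) (z : X)
    (sm : B → X → X) (R : Finset X) : Prop :=
  z ∉ R ∧ (∀ x ∈ R, ∀ y ∈ R, x ≠ y → Orth m z sm x y) ∧
  ∀ u : X, ∃ a : X → B,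
    (∀ x ∈ R, ∀ y ∈ R, x ≠ y → a x * a y = 0) ∧
    (∀ x ∈ R, a x * m.d u x = 0) ∧ (1 + ∑ x ∈ R, a x) * m.d u z = 0

section Helpers

variable {B : Type} [BooleanRing B]

lemma d_scale {X : Type} (m : BooleanMetric B X) {a : B} {x y : X}
    (h : a * m.d x y = 0) (w : X) : a * m.d x w = a * m.d y w := by
  have t1 := m.d_tri x y w
  have t2 := m.d_tri y x w
  unfold ble bjoin at t1 t2
  have h' : a * m.d y x = 0 := by rw [m.d_symm]; exact h
  linear_combination (-a) * t1 + a * t2 + (m.d x w + m.d x w * m.d y w) * h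
    - (m.d y w + m.d y w * m.d x w) * h'

lemma two_scale {X : Type} (m : BooleanMetric B X) {a b : B} {x y x' y' : X}
    (ha : a * m.d x x' = 0) (hb : b * m.d y y' = 0) :
    a * b * m.d x y = a * b * m.d x' y' := by
  have h1 := d_scale m ha y
  have h2 : b * m.d y x' = b * m.d y' x' := d_scale m hb x'
  calc a * b * m.d x y = b * (a * m.d x y) := by ring
    _ = b * (a * m.d x' y) := by rw [h1]
    _ = a * (b * m.d y x') := by rw [m.d_symm x' y]; ring
    _ = a * (b * m.d y' x') := by rw [h2]
    _ = a * b * m.d x' y' := by rw [m.d_symm y' x']; ring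

lemma comb_dist {X : Type} (m : BooleanMetric B X) {k : ℕ} {a : Fin k → B}
    {xs : Fin k → X} {x : X} (hc : IsConvComb m a xs x) (hs : ∑ i, a i = 1) (w : X) :
    m.d x w = ∑ i, a i * m.d (xs i) w := by
  calc m.d x w = (∑ i, a i) * m.d x w := by rw [hs, one_mul]
    _ = ∑ i, a i * m.d x w := Finset.sum_mul _ _ _
    _ = ∑ i, a i * m.d (xs i) w := Finset.sum_congr rfl fun i _ => d_scale m (hc i) w

lemma comb_unique {X : Type} (m : BooleanMetric B X) {k : ℕ} {a : Fin k → B}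
    {xs : Fin k → X} {x x' : X} (hc : IsConvComb m a xs x) (hc' : IsConvComb m a xs x')
    (hs : ∑ i, a i = 1) : x = x' := by
  have h0 : m.d x x' = 0 := by
    rw [comb_dist m hc hs x']
    exact Finset.sum_eq_zero fun i _ => by rw [m.d_symm]; exact hc' i
  exact (m.d_eq_zero x x').mp h0

lemma ble_mul_zero {a c e : B} (h : ble c e) (h0 : a * e = 0) : a * c = 0 := by
  unfold ble at h
  calc a * c = a * (c * e) := by rw [h]
    _ = c * (a * e) := by ring
    _ = 0 := by rw [h0, mul_zero]

lemma comb_expand {X : Type} (m : BooleanMetric B X) {k l : ℕ} {a : Fin k → B}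
    {b : Fin l → B} (ha : ∑ i, a i = 1) (hb : ∑ j, b j = 1) (c : B) :
    c = ∑ i, ∑ j, a i * b j * c := by
  calc c = (∑ i, a i) * ((∑ j, b j) * c) := by rw [ha, hb, one_mul, one_mul]
    _ = ∑ i, a i * ((∑ j, b j) * c) := Finset.sum_mul _ _ _
    _ = ∑ i, ∑ j, a i * b j * c := Finset.sum_congr rfl fun i _ => by
          rw [Finset.sum_mul, Finset.mul_sum]
          exact Finset.sum_congr rfl fun j _ => by ring

lemma ext_le {X Y : Type} (mX : BooleanMetric B X) (mY : BooleanMetric B Y)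
    {k l : ℕ} {a : Fin k → B} {b : Fin l → B} {xs : Fin k → X} {ys : Fin l → X}
    {gs : Fin k → Y} {hs : Fin l → Y} {x y : X} {u v : Y}
    (hx : IsConvComb mX a xs x) (ha : ∑ i, a i = 1)
    (hy : IsConvComb mX b ys y) (hb : ∑ j, b j = 1)
    (hu : IsConvComb mY a gs u) (hv : IsConvComb mY b hs v)
    (hle : ∀ i j, ble (mY.d (gs i) (hs j)) (mX.d (xs i) (ys j))) :
    ble (mY.d u v) (mX.d x y) := by
  unfold ble
  have expand := comb_expand (B := B) mX ha hb (mY.d u v)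
  have term : ∀ i j, (a i * b j * mY.d u v) * mX.d x y = a i * b j * mY.d u v := by
    intro i j
    have e1 : a i * b j * mY.d u v = a i * b j * mY.d (gs i) (hs j) :=
      two_scale mY (hu i) (hv j)
    have e2 : a i * b j * mX.d x y = a i * b j * mX.d (xs i) (ys j) :=
      two_scale mX (hx i) (hy j)
    have h3 := hle i j
    unfold ble at h3
    linear_combination (mX.d x y - 1) * e1 + mY.d (gs i) (hs j) * e2 + (a i * b j) * h3
  calc mY.d u v * mX.d x y = (∑ i, ∑ j, a i * b j * mY.d u v) * mX.d x y := by
        rw [← expand]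
    _ = ∑ i, ∑ j, (a i * b j * mY.d u v) * mX.d x y := by
        rw [Finset.sum_mul]
        exact Finset.sum_congr rfl fun i _ => Finset.sum_mul _ _ _
    _ = ∑ i, ∑ j, a i * b j * mY.d u v :=
        Finset.sum_congr rfl fun i _ => Finset.sum_congr rfl fun j _ => term i j
    _ = mY.d u v := expand.symm

lemma ext_eq {X Y : Type} (mX : BooleanMetric B X) (mY : BooleanMetric B Y)
    {k l : ℕ} {a : Fin k → B} {b : Fin l → B} {xs : Fin k → X} {ys : Fin l → X}
    {gs : Fin k → Y} {hs : Fin l → Y} {x y : X} {u v : Y}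
    (hx : IsConvComb mX a xs x) (ha : ∑ i, a i = 1)
    (hy : IsConvComb mX b ys y) (hb : ∑ j, b j = 1)
    (hu : IsConvComb mY a gs u) (hv : IsConvComb mY b hs v)
    (heq : ∀ i j, mY.d (gs i) (hs j) = mX.d (xs i) (ys j)) :
    mY.d u v = mX.d x y := by
  have e1 := comb_expand (B := B) mX ha hb (mY.d u v)
  have e2 := comb_expand (B := B) mX ha hb (mX.d x y)
  rw [e1, e2]
  refine Finset.sum_congr rfl fun i _ => Finset.sum_congr rfl fun j _ => ?_
  calc a i * b j * mY.d u v = a i * b j * mY.d (gs i) (hs j) := two_scale mY (hu i) (hv j)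
    _ = a i * b j * mX.d (xs i) (ys j) := by rw [heq i j]
    _ = a i * b j * mX.d x y := (two_scale mX (hx i) (hy j)).symm

lemma pushcomb {X Y : Type} (mX : BooleanMetric B X) (mY : BooleanMetric B Y) {S : Set X}
    {F f : X → Y} (hFc : Contractive mX mY F) (hFf : ∀ x ∈ S, F x = f x)
    {k : ℕ} {a : Fin k → B} {xs : Fin k → X} (hmem : ∀ i, xs i ∈ S) {x : X}
    (hc : IsConvComb mX a xs x) : IsConvComb mY a (fun i => f (xs i)) (F x) := by
  intro i
  have h := hFc x (xs i)
  rw [hFf (xs i) (hmem i)] at h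
  exact ble_mul_zero h (hc i)

end Helpers

/-- Extension of contractive maps to convex closures: a contractive map `f : S → T`
between subsets with convex closures extends to a unique contractive map on the whole
closures; the extension is an immersion iff `f` is, and if `f` is an isometry of `S`
onto `T`, the extension is an isometry. -/
theorem stmt6 {B X Y : Type} [BooleanRing B]
    (mX : BooleanMetric B X) (mY : BooleanMetric B Y)
    (S : Set X) (T : Set Y) (hX : IsConvexClosure mX S) (hY : IsConvexClosure mY T)
    (f : X → Y) (hmap : ∀ x ∈ S, f x ∈ T)
    (hf : ∀ x ∈ S, ∀ y ∈ S, ble (mY.d (f x) (f y)) (mX.d x y)) :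
    (∃! F : X → Y, Contractive mX mY F ∧ ∀ x ∈ S, F x = f x) ∧
    ∀ F : X → Y, Contractive mX mY F → (∀ x ∈ S, F x = f x) →
      ((∀ x y, mY.d (F x) (F y) = mX.d x y) ↔
        ∀ x ∈ S, ∀ y ∈ S, mY.d (f x) (f y) = mX.d x y) ∧
      ((∀ x ∈ S, ∀ y ∈ S, mY.d (f x) (f y) = mX.d x y) → Set.BijOn f S T →
        Function.Bijective F) := by
  obtain ⟨hXconv, hXrep⟩ := hX
  obtain ⟨hYconv, hYrep⟩ := hY
  choose k a xs hmem horth hsum hcomb using hXrep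
  choose F hF1 hF using fun x =>
    hYconv (k x) (a x) (fun i => f (xs x i)) (fun i => Set.mem_univ _) (horth x) (hsum x)
  have hFcontr : Contractive mX mY F := fun x y =>
    ext_le mX mY (hcomb x) (hsum x) (hcomb y) (hsum y) (hF x) (hF y)
      (fun i j => hf _ (hmem x i) _ (hmem y j))
  have hFext : ∀ x ∈ S, F x = f x := by
    intro x hxS
    have hfc : IsConvComb mY (a x) (fun i => f (xs x i)) (f x) := fun i =>
      ble_mul_zero (hf x hxS (xs x i) (hmem x i)) (hcomb x i)
    exact comb_unique mY (hF x) hfc (hsum x)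
  constructor
  · refine ⟨F, ⟨hFcontr, hFext⟩, ?_⟩
    intro G ⟨hGc, hGf⟩
    funext x
    exact comb_unique mY (pushcomb mX mY hGc hGf (hmem x) (hcomb x)) (hF x) (hsum x)
  · intro F' hF'c hF'f
    have hiff : (∀ x y, mY.d (F' x) (F' y) = mX.d x y) ↔
        ∀ x ∈ S, ∀ y ∈ S, mY.d (f x) (f y) = mX.d x y := by
      constructor
      · intro h x hx y hy
        rw [← hF'f x hx, ← hF'f y hy]
        exact h x y
      · intro h x y
        exact ext_eq mX mY (hcomb x) (hsum x) (hcomb y) (hsum y)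
          (pushcomb mX mY hF'c hF'f (hmem x) (hcomb x))
          (pushcomb mX mY hF'c hF'f (hmem y) (hcomb y))
          (fun i j => h _ (hmem x i) _ (hmem y j))
    refine ⟨hiff, fun himm hbij => ?_⟩
    have hFimm := hiff.mpr himm
    constructor
    · intro x y hxy
      refine (mX.d_eq_zero x y).mp ?_
      rw [← hFimm x y, hxy]
      exact (mY.d_eq_zero _ _).mpr rfl
    · intro w
      obtain ⟨l, b, ts, htsT, hborth, hbsum, hwcomb⟩ := hYrep w
      choose xs' hxs'S hfxs' using fun j => hbij.2.2 (htsT j)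
      obtain ⟨x, -, hxcomb⟩ := hXconv l b xs' (fun i => Set.mem_univ _) hborth hbsum
      refine ⟨x, ?_⟩
      have h1 : IsConvComb mY b (fun j => f (xs' j)) (F' x) :=
        pushcomb mX mY hF'c hF'f hxs'S hxcomb
      have h1' : IsConvComb mY b ts (F' x) := by
        intro j
        rw [← hfxs' j]
        exact h1 j
      exact comb_unique mY h1' hwcomb hbsum
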